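/- Let N ≥ 1, let α ∈ (0,1), and let T : ℝ^N → ℝ^N be an α-averaged operator with Fix T ≠ ∅. Let γ̄ < 1 and let (γ_k)_{k≥0} be a non-decreasing sequence in [0, γ̄) such that there exists m > 0 with 1 − γ_{k−1} − (1 − γ_k)·γ_k − (α/(1−α))·γ_k·(1 + γ_k) ≥ m for all k > 1. Then the sequence defined by x_{−1} = x₀ ∈ ℝ^N and x_{k+1} = T(x_k + γ_k·(x_k − x_{k−1})) converges to a point of Fix T. -/

import Mathlib

open Filter Topology Finset

section aux

lemma key_ineq {E : Type*} [NormedAddCommGroup E] [InnerProductSpace ℝ E]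
    (c g : ℝ) (hc : 0 < c) (hg : 0 ≤ g) (u v w z : E)
    (h : ‖w - z‖ ^ 2 + c * ‖(u + g • (u - v)) - w‖ ^ 2 ≤ ‖(u + g • (u - v)) - z‖ ^ 2) :
    ‖w - z‖ ^ 2 - ‖u - z‖ ^ 2 - g * (‖u - z‖ ^ 2 - ‖v - z‖ ^ 2)
      ≤ (g * (1 + g) + c * g * (1 - g)) * ‖u - v‖ ^ 2 - c * (1 - g) * ‖w - u‖ ^ 2 := by
  set a := u - z with ha
  set b := u - v with hb
  set e := w - u with he
  have hsq : ‖g • b‖ ^ 2 = g ^ 2 * ‖b‖ ^ 2 := by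
    rw [norm_smul, mul_pow, Real.norm_eq_abs, sq_abs]
  have e1 : ‖(u + g • (u - v)) - z‖ ^ 2 = ‖a‖ ^ 2 + 2 * (g * inner ℝ a b) + g ^ 2 * ‖b‖ ^ 2 := by
    have : (u + g • (u - v)) - z = a + g • b := by rw [ha, hb]; abel
    rw [this, norm_add_sq_real, real_inner_smul_right, hsq]
  have e2 : ‖v - z‖ ^ 2 = ‖a‖ ^ 2 - 2 * inner ℝ a b + ‖b‖ ^ 2 := by
    have : v - z = a - b := by rw [ha, hb]; abel
    rw [this, norm_sub_sq_real]
  have e3 : ‖(u + g • (u - v)) - w‖ ^ 2 = ‖e‖ ^ 2 - 2 * (g * inner ℝ e b) + g ^ 2 * ‖b‖ ^ 2 := by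
    have : (u + g • (u - v)) - w = g • b - e := by rw [hb, he]; abel
    rw [this, norm_sub_sq_real, hsq, real_inner_smul_left, real_inner_comm b e]
    ring
  rw [e1, e3] at h
  have h2 : 2 * (inner ℝ e b : ℝ) ≤ ‖e‖ ^ 2 + ‖b‖ ^ 2 := by
    nlinarith [real_inner_le_norm e b, sq_nonneg (‖e‖ - ‖b‖)]
  rw [e2]
  nlinarith [mul_nonneg (mul_nonneg hc.le hg) (sub_nonneg.2 h2)]

lemma geom_summable (θ ε : ℕ → ℝ) (q : ℝ) (hq0 : 0 ≤ q) (hq1 : q < 1)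
    (hθ : ∀ n, 0 ≤ θ n) (hεn : ∀ n, 0 ≤ ε n) (hε : Summable ε)
    (h : ∀ n, θ (n + 1) ≤ q * θ n + ε n) : Summable θ := by
  set E := ∑' n, ε n with hE
  have hE0 : 0 ≤ E := tsum_nonneg hεn
  have hEb : ∀ n, ∑ i ∈ range n, ε i ≤ E := fun n =>
    Summable.sum_le_tsum (range n) (fun i _ => hεn i) hε
  have hmonoS : Monotone (fun n => ∑ i ∈ range n, θ i) := by
    apply monotone_nat_of_le_succ
    intro n
    rw [Finset.sum_range_succ]
    linarith [hθ n]
  have hS : ∀ n, ∑ i ∈ range n, θ i ≤ (θ 0 + E) / (1 - q) := by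
    intro n
    induction n with
    | zero =>
      simp
      apply div_nonneg (by linarith [hθ 0]) (by linarith)
    | succ n ih =>
      have h1 : ∑ i ∈ range (n + 1), θ i = (∑ i ∈ range n, θ (i + 1)) + θ 0 :=
        Finset.sum_range_succ' θ n
      have h2 : ∑ i ∈ range n, θ (i + 1) ≤ q * (∑ i ∈ range n, θ i) + E := by
        calc ∑ i ∈ range n, θ (i + 1) ≤ ∑ i ∈ range n, (q * θ i + ε i) :=
              Finset.sum_le_sum (fun i _ => h i)
          _ = q * (∑ i ∈ range n, θ i) + ∑ i ∈ range n, ε i := by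
              rw [Finset.sum_add_distrib, Finset.mul_sum]
          _ ≤ q * (∑ i ∈ range n, θ i) + E := by linarith [hEb n]
      have h3 : ∑ i ∈ range n, θ i ≤ ∑ i ∈ range (n + 1), θ i := hmonoS (Nat.le_succ n)
      have h4 : (1 - q) * (∑ i ∈ range (n + 1), θ i) ≤ θ 0 + E := by
        nlinarith [hmonoS (Nat.le_succ n)]
      have hq : 0 < 1 - q := by linarith
      rw [le_div_iff₀ hq]
      linarith [h4]
  exact summable_of_sum_range_le hθ hS

lemma conv_of_quasi (φ θ : ℕ → ℝ) (hφ : ∀ n, 0 ≤ φ n) (hθn : ∀ n, 0 ≤ θ n)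
    (hθ : Summable θ) (h : ∀ n, φ (n + 1) ≤ φ n + θ n) :
    ∃ L, Tendsto φ atTop (𝓝 L) := by
  set S : ℕ → ℝ := fun n => ∑ i ∈ range n, θ i with hSdef
  set ψ : ℕ → ℝ := fun n => φ n - S n with hψ
  have hanti : Antitone ψ := by
    apply antitone_nat_of_succ_le
    intro n
    have : S (n + 1) = S n + θ n := Finset.sum_range_succ θ n
    simp only [hψ, this]
    linarith [h n]
  have hbdd : BddBelow (Set.range ψ) := by
    refine ⟨-(∑' n, θ n), ?_⟩
    rintro _ ⟨n, rfl⟩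
    have : S n ≤ ∑' n, θ n := Summable.sum_le_tsum (range n) (fun i _ => hθn i) hθ
    simp only [hψ]
    linarith [hφ n]
  have h1 : Tendsto ψ atTop (𝓝 (⨅ n, ψ n)) := tendsto_atTop_ciInf hanti hbdd
  have h2 : Tendsto S atTop (𝓝 (∑' n, θ n)) := hθ.hasSum.tendsto_sum_nat
  exact ⟨_, by simpa [hψ] using h1.add h2⟩

end aux

/-- `T` is an `α`-averaged operator on `ℝ^N` (Euclidean norm). -/
def IsAveragedOp {N : ℕ} (α : ℝ)
    (T : EuclideanSpace ℝ (Fin N) → EuclideanSpace ℝ (Fin N)) : Prop :=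
  ∀ x y : EuclideanSpace ℝ (Fin N),
    ‖T x - T y‖ ^ 2 + ((1 - α) / α) * ‖(x - T x) - (y - T y)‖ ^ 2 ≤ ‖x - y‖ ^ 2

set_option maxHeartbeats 1000000 in
/-- Inertial iterations converge when `(γ_k)` is non-decreasing in `[0, γ̄)`, `γ̄ < 1`, and
`1 − γ_{k−1} − (1 − γ_k) γ_k − (α/(1−α)) γ_k (1+γ_k) ≥ m > 0` for all `k > 1`. -/
theorem stmt_2 {N : ℕ} (hN : 1 ≤ N) {α : ℝ} (hα : α ∈ Set.Ioo (0 : ℝ) 1)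
    (T : EuclideanSpace ℝ (Fin N) → EuclideanSpace ℝ (Fin N))
    (hT : IsAveragedOp α T) (hfix : ∃ z, T z = z)
    (γ : ℕ → ℝ) (γbar : ℝ) (hγbar : γbar < 1)
    (hmono : Monotone γ) (hγ : ∀ k, 0 ≤ γ k ∧ γ k < γbar)
    (m : ℝ) (hm : 0 < m)
    (hcond : ∀ k : ℕ, 2 ≤ k →
      m ≤ 1 - γ (k - 1) - (1 - γ k) * γ k - (α / (1 - α)) * γ k * (1 + γ k))
    (x₀ : EuclideanSpace ℝ (Fin N)) (x : ℕ → EuclideanSpace ℝ (Fin N))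
    (hx0 : x 0 = x₀)
    -- first step, with the convention `x_{-1} = x₀`:
    (hx1 : x 1 = T (x 0 + γ 0 • (x 0 - x 0)))
    (hrec : ∀ k, x (k + 2) = T (x (k + 1) + γ (k + 1) • (x (k + 1) - x k))) :
    ∃ xbar, T xbar = xbar ∧ Tendsto x atTop (𝓝 xbar) := by
  obtain ⟨hα0, hα1⟩ := hα
  set c : ℝ := (1 - α) / α with hcdef
  have hc : 0 < c := div_pos (by linarith) hα0
  have hc1 : c * (α / (1 - α)) = 1 := by
    rw [hcdef]
    field_simp
  have hγ0 : ∀ k, 0 ≤ γ k := fun k => (hγ k).1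
  have hγb : ∀ k, γ k < γbar := fun k => (hγ k).2
  have hγbar0 : 0 < γbar := lt_of_le_of_lt (hγ0 0) (hγb 0)
  have hγ1 : ∀ k, γ k < 1 := fun k => lt_trans (hγb k) hγbar
  -- nonexpansiveness
  have hne : ∀ a b, ‖T a - T b‖ ≤ ‖a - b‖ := by
    intro a b
    have h := hT a b
    nlinarith [norm_nonneg (T a - T b), norm_nonneg (a - b),
      mul_nonneg hc.le (sq_nonneg ‖(a - T a) - (b - T b)‖),
      sq_nonneg ‖(a - T a) - (b - T b)‖]
  have hTcont : Continuous T := by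
    have : LipschitzWith 1 T := by
      apply LipschitzWith.of_dist_le_mul
      intro a b
      rw [dist_eq_norm, dist_eq_norm]
      simpa using hne a b
    exact this.continuous
  -- key inequality for any fixed point
  have KI : ∀ z, T z = z → ∀ n : ℕ,
      ‖x (n + 2) - z‖ ^ 2 - ‖x (n + 1) - z‖ ^ 2
        - γ (n + 1) * (‖x (n + 1) - z‖ ^ 2 - ‖x n - z‖ ^ 2)
      ≤ (γ (n + 1) * (1 + γ (n + 1)) + c * γ (n + 1) * (1 - γ (n + 1)))
          * ‖x (n + 1) - x n‖ ^ 2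
        - c * (1 - γ (n + 1)) * ‖x (n + 2) - x (n + 1)‖ ^ 2 := by
    intro z hz n
    have h := hT (x (n + 1) + γ (n + 1) • (x (n + 1) - x n)) z
    rw [hz, ← hrec n] at h
    have h' : ‖x (n + 2) - z‖ ^ 2
        + c * ‖(x (n + 1) + γ (n + 1) • (x (n + 1) - x n)) - x (n + 2)‖ ^ 2
        ≤ ‖(x (n + 1) + γ (n + 1) • (x (n + 1) - x n)) - z‖ ^ 2 := by
      have hzz : z - z = (0 : EuclideanSpace ℝ (Fin N)) := sub_self z
      rw [hzz, sub_zero] at h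
      exact h
    exact key_ineq c (γ (n + 1)) hc (hγ0 (n + 1)) (x (n + 1)) (x n) (x (n + 2)) z h'
  obtain ⟨z₀, hz₀⟩ := hfix
  set φ : ℕ → ℝ := fun n => ‖x n - z₀‖ ^ 2 with hφdef
  set D : ℕ → ℝ := fun n => ‖x (n + 1) - x n‖ ^ 2 with hDdef
  have hφ0 : ∀ n, 0 ≤ φ n := fun n => sq_nonneg _
  have hD0 : ∀ n, 0 ≤ D n := fun n => sq_nonneg _
  set M : ℕ → ℝ := fun n => φ (n + 1) - γ (n + 1) * φ n + c * (1 - γ n) * D n with hMdef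
  have hMdec : ∀ n, 1 ≤ n → M (n + 1) + c * m * D n ≤ M n := by
    intro n hn
    have hk := KI z₀ hz₀ n
    have hcnd := hcond (n + 1) (by omega)
    simp only [Nat.add_sub_cancel] at hcnd
    have hmono2 : γ (n + 1) ≤ γ (n + 2) := hmono (by omega)
    have hφ1 : 0 ≤ φ (n + 1) := hφ0 (n + 1)
    have h6 : c * (α / (1 - α)) * (γ (n + 1) * (1 + γ (n + 1)))
        = γ (n + 1) * (1 + γ (n + 1)) := by rw [hc1]; ring
    have hA : γ (n + 1) * (1 + γ (n + 1)) + c * γ (n + 1) * (1 - γ (n + 1)) + c * m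
        ≤ c * (1 - γ n) := by
      have h5 := mul_le_mul_of_nonneg_left hcnd hc.le
      nlinarith [h5, h6]
    have hprod : 0 ≤ (c * (1 - γ n)
        - (γ (n + 1) * (1 + γ (n + 1)) + c * γ (n + 1) * (1 - γ (n + 1)) + c * m)) * D n :=
      mul_nonneg (by linarith) (hD0 n)
    have hφmul : γ (n + 1) * φ (n + 1) ≤ γ (n + 2) * φ (n + 1) :=
      mul_le_mul_of_nonneg_right hmono2 hφ1
    simp only [hMdef, hφdef, hDdef]
    nlinarith [hk, hprod, hφmul]
  have hMle : ∀ n, 1 ≤ n → M n ≤ M 1 := by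
    intro n hn
    induction n with
    | zero => omega
    | succ k ih =>
      rcases Nat.eq_or_lt_of_le hn with h | h
      · rw [← h]
      · have hk1 : 1 ≤ k := by omega
        have h1 := hMdec k hk1
        have h2 := ih hk1
        have h3 : 0 ≤ c * m * D k := mul_nonneg (mul_nonneg hc.le hm.le) (hD0 k)
        linarith
  set B : ℝ := max (M 1) 0 with hBdef
  have hB : 0 ≤ B := le_max_right _ _
  have hMB : ∀ n, 1 ≤ n → M n ≤ B := fun n hn => (hMle n hn).trans (le_max_left _ _)
  set K : ℝ := max (max (φ 0) (φ 1)) (B / (1 - γbar)) with hKdef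
  have h1γ : (0:ℝ) < 1 - γbar := by linarith
  have hKB : B ≤ (1 - γbar) * K := by
    have h1 : B / (1 - γbar) ≤ K := le_max_right _ _
    calc B = (1 - γbar) * (B / (1 - γbar)) := by field_simp
      _ ≤ (1 - γbar) * K := by nlinarith
  have hφstep : ∀ n, φ (n + 2) ≤ M (n + 1) + γbar * φ (n + 1) := by
    intro n
    have h1 : γ (n + 2) * φ (n + 1) ≤ γbar * φ (n + 1) :=
      mul_le_mul_of_nonneg_right (hγb _).le (hφ0 _)
    have h2 : 0 ≤ c * (1 - γ (n + 1)) * D (n + 1) :=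
      mul_nonneg (mul_nonneg hc.le (by linarith [hγ1 (n + 1)])) (hD0 _)
    simp only [hMdef]
    linarith
  have hφK : ∀ n, φ n ≤ K := by
    intro n
    induction n using Nat.strong_induction_on with
    | _ n ih =>
      match n with
      | 0 => exact (le_max_left (φ 0) (φ 1)).trans (le_max_left _ _)
      | 1 => exact (le_max_right (φ 0) (φ 1)).trans (le_max_left _ _)
      | (k + 2) =>
        have hK1 := ih (k + 1) (by omega)
        have h1 := hφstep k
        have h2 := hMB (k + 1) (by omega)
        have h3 : γbar * φ (k + 1) ≤ γbar * K := mul_le_mul_of_nonneg_left hK1 hγbar0.le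
        linarith
  have hK0 : 0 ≤ K := le_trans (hφ0 0) (hφK 0)
  have htel : ∀ j, c * m * (∑ n ∈ range j, D (n + 1)) ≤ M 1 - M (j + 1) := by
    intro j
    induction j with
    | zero => simp
    | succ j ih =>
      rw [Finset.sum_range_succ, mul_add]
      have h1 := hMdec (j + 1) (by omega)
      linarith
  have hMlb : ∀ n, -(γbar * K) ≤ M n := by
    intro n
    have h1 : γ (n + 1) * φ n ≤ γbar * K :=
      mul_le_mul (hγb (n + 1)).le (hφK n) (hφ0 n) hγbar0.le
    have h2 : 0 ≤ c * (1 - γ n) * D n :=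
      mul_nonneg (mul_nonneg hc.le (by linarith [hγ1 n])) (hD0 n)
    simp only [hMdef]
    linarith [hφ0 (n + 1)]
  have hcm : 0 < c * m := mul_pos hc hm
  have hDsum : Summable D := by
    rw [← summable_nat_add_iff 1]
    apply summable_of_sum_range_le (c := (M 1 + γbar * K) / (c * m)) (fun n => hD0 (n + 1))
    intro j
    rw [le_div_iff₀ hcm]
    have h1 := htel j
    have h2 := hMlb (j + 1)
    nlinarith
  have hDlim : Tendsto D atTop (𝓝 0) := hDsum.tendsto_atTop_zero
  have hdlim : Tendsto (fun n => ‖x (n + 1) - x n‖) atTop (𝓝 0) := by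
    have h1 : Tendsto (fun n => Real.sqrt (D n)) atTop (𝓝 (Real.sqrt 0)) :=
      (Real.continuous_sqrt.tendsto 0).comp hDlim
    have h2 : (fun n => Real.sqrt (D n)) = fun n => ‖x (n + 1) - x n‖ :=
      funext fun n => Real.sqrt_sq (norm_nonneg _)
    rw [h2, Real.sqrt_zero] at h1
    exact h1
  have hres : Tendsto (fun n => ‖x n - T (x n)‖) atTop (𝓝 0) := by
    rw [← tendsto_add_atTop_iff_nat 1]
    apply squeeze_zero (fun n => norm_nonneg _)
      (g := fun n => ‖x (n + 2) - x (n + 1)‖ + γbar * ‖x (n + 1) - x n‖)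
    · intro n
      have h1 : ‖x (n + 1) - T (x (n + 1))‖
          ≤ ‖x (n + 1) - x (n + 2)‖ + ‖x (n + 2) - T (x (n + 1))‖ := by
        have := dist_triangle (x (n + 1)) (x (n + 2)) (T (x (n + 1)))
        simpa [dist_eq_norm] using this
      have h2 : ‖x (n + 2) - T (x (n + 1))‖ ≤ γ (n + 1) * ‖x (n + 1) - x n‖ := by
        rw [hrec n]
        have h3 := hne (x (n + 1) + γ (n + 1) • (x (n + 1) - x n)) (x (n + 1))
        simpa [norm_smul, abs_of_nonneg (hγ0 (n + 1))] using h3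
      have h4 : γ (n + 1) * ‖x (n + 1) - x n‖ ≤ γbar * ‖x (n + 1) - x n‖ :=
        mul_le_mul_of_nonneg_right (hγb _).le (norm_nonneg _)
      have h5 : ‖x (n + 1) - x (n + 2)‖ = ‖x (n + 2) - x (n + 1)‖ := norm_sub_rev _ _
      linarith
    · have h1 : Tendsto (fun n => ‖x (n + 2) - x (n + 1)‖) atTop (𝓝 0) := by
        have := hdlim.comp (tendsto_add_atTop_nat 1)
        simpa [Function.comp_def] using this
      have h2 : Tendsto (fun n => γbar * ‖x (n + 1) - x n‖) atTop (𝓝 (γbar * 0)) :=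
        hdlim.const_mul γbar
      simpa using h1.add h2
  have hmem : ∀ n, x n ∈ Metric.closedBall z₀ (Real.sqrt K) := by
    intro n
    rw [Metric.mem_closedBall, dist_eq_norm]
    have h1 : ‖x n - z₀‖ = Real.sqrt (φ n) := (Real.sqrt_sq (norm_nonneg _)).symm
    rw [h1]
    exact Real.sqrt_le_sqrt (hφK n)
  obtain ⟨xbar, -, σ, hσmono, hσtend⟩ :=
    tendsto_subseq_of_bounded Metric.isBounded_closedBall hmem
  have hσat : Tendsto σ atTop atTop := hσmono.tendsto_atTop
  have hfixbar : T xbar = xbar := by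
    have h1 : Tendsto (fun j => ‖x (σ j) - T (x (σ j))‖) atTop (𝓝 0) := hres.comp hσat
    have hx' : Tendsto (fun j => x (σ j)) atTop (𝓝 xbar) := hσtend
    have h2 : Tendsto (fun j => ‖x (σ j) - T (x (σ j))‖) atTop (𝓝 ‖xbar - T xbar‖) :=
      (hx'.sub ((hTcont.tendsto xbar).comp hx')).norm
    have h3 : ‖xbar - T xbar‖ = 0 := tendsto_nhds_unique h2 h1
    exact (sub_eq_zero.mp (norm_eq_zero.mp h3)).symm
  set ψ : ℕ → ℝ := fun n => ‖x n - xbar‖ ^ 2 with hψdef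
  set θ : ℕ → ℝ := fun n => max (ψ (n + 1) - ψ n) 0 with hθdef
  have hθ0 : ∀ n, 0 ≤ θ n := fun n => le_max_right _ _
  set Ca : ℝ := γbar * (1 + γbar) + c * γbar with hCadef
  have hCa0 : 0 ≤ Ca := by positivity
  have hθrec : ∀ n, θ (n + 1) ≤ γbar * θ n + Ca * D n := by
    intro n
    have hk := KI xbar hfixbar n
    have hA : γ (n + 1) * (1 + γ (n + 1)) + c * γ (n + 1) * (1 - γ (n + 1)) ≤ Ca := by
      have hg0 := hγ0 (n + 1)
      have hgb := (hγb (n + 1)).le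
      have hg1 := (hγ1 (n + 1)).le
      nlinarith [mul_nonneg hc.le hg0]
    have h2 : ψ (n + 2) - ψ (n + 1) ≤ γbar * θ n + Ca * D n := by
      have hmax : ψ (n + 1) - ψ n ≤ θ n := le_max_left _ _
      have hd1 : γ (n + 1) * (ψ (n + 1) - ψ n) ≤ γbar * θ n := by
        calc γ (n + 1) * (ψ (n + 1) - ψ n) ≤ γ (n + 1) * θ n :=
              mul_le_mul_of_nonneg_left hmax (hγ0 (n + 1))
          _ ≤ γbar * θ n := mul_le_mul_of_nonneg_right (hγb _).le (hθ0 n)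
      have hd2 : (γ (n + 1) * (1 + γ (n + 1)) + c * γ (n + 1) * (1 - γ (n + 1))) * D n
          ≤ Ca * D n := mul_le_mul_of_nonneg_right hA (hD0 n)
      have hd3 : 0 ≤ c * (1 - γ (n + 1)) * ‖x (n + 2) - x (n + 1)‖ ^ 2 :=
        mul_nonneg (mul_nonneg hc.le (by linarith [hγ1 (n + 1)])) (sq_nonneg _)
      simp only [hψdef, hDdef] at hk hd2 hd1 ⊢
      linarith
    have h3 : 0 ≤ γbar * θ n + Ca * D n :=
      add_nonneg (mul_nonneg hγbar0.le (hθ0 n)) (mul_nonneg hCa0 (hD0 n))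
    exact max_le h2 h3
  have hθsum : Summable θ :=
    geom_summable θ (fun n => Ca * D n) γbar hγbar0.le hγbar hθ0
      (fun n => mul_nonneg hCa0 (hD0 n)) (hDsum.mul_left Ca) hθrec
  obtain ⟨L, hL⟩ := conv_of_quasi ψ θ (fun n => sq_nonneg _) hθ0 hθsum
    (fun n => by linarith [le_max_left (ψ (n + 1) - ψ n) 0])
  have h0 : Tendsto (fun j => ψ (σ j)) atTop (𝓝 0) := by
    have h1 : Tendsto (fun j => ‖x (σ j) - xbar‖) atTop (𝓝 0) := by
      have := (hσtend.sub (tendsto_const_nhds (x := xbar))).norm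
      simpa using this
    have h2 := h1.pow 2
    simpa [hψdef] using h2
  have hL0 : L = 0 := tendsto_nhds_unique (hL.comp hσat) h0
  refine ⟨xbar, hfixbar, ?_⟩
  rw [tendsto_iff_norm_sub_tendsto_zero]
  have h1 : Tendsto (fun n => Real.sqrt (ψ n)) atTop (𝓝 (Real.sqrt 0)) :=
    (Real.continuous_sqrt.tendsto 0).comp (hL0 ▸ hL)
  have h2 : (fun n => Real.sqrt (ψ n)) = fun n => ‖x n - xbar‖ :=
    funext fun n => Real.sqrt_sq (norm_nonneg _)
  rw [h2, Real.sqrt_zero] at h1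
  exact h1
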